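/- Let 0 ≤ n < 1 and 0 ≤ θ ≤ π/2, set θ_o = arccos(n cosθ), θ₄ = arccos[(1 + 2n cosθ + n² cos 2θ)/(1 + n² + 2n cosθ)], and p₂ = (1 + n² + 2n cosθ)/(2(1 + n cosθ)). Let f : ℝ² → ℝ be symmetric and concave on Ω₂ with f(1,0) = 0, and assume f(cos²(θ₄/2), sin²(θ₄/2)) > 0. Then the average coherences of the qubit decompositions D^(m₂), D^(s), D^(M) satisfy the strict order relation p₂ · f(cos²(θ₄/2), sin²(θ₄/2)) < f(cos²(θ/2), sin²(θ/2)) ≤ f(cos²(θ_o/2), sin²(θ_o/2)), i.e. C̄(D^(m₂)) < C̄(D^(s)) ≤ C̄(D^(M)). (Order relation (9).) -/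

import Mathlib

noncomputable section

/-- A symmetric function: invariant under all coordinate permutations. -/
def SymmetricFn {n : ℕ} (f : (Fin n → ℝ) → ℝ) : Prop :=
  ∀ (σ : Equiv.Perm (Fin n)) (x : Fin n → ℝ), f (x ∘ σ) = f x

private lemma vec2_mem (a : ℝ) (h0 : 0 ≤ a) (h1 : a ≤ 1) :
    ![1 - a, a] ∈ stdSimplex ℝ (Fin 2) := by
  constructor
  · intro i
    fin_cases i
    · simpa using by linarith
    · simpa using h0
  · simp [Fin.sum_univ_two]

private lemma fswap (f : (Fin 2 → ℝ) → ℝ) (hsym : SymmetricFn f) (a b : ℝ) :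
    f ![a, b] = f ![b, a] := by
  have h := hsym (Equiv.swap 0 1) ![b, a]
  have h2 : (![b, a] ∘ (Equiv.swap (0 : Fin 2) 1)) = ![a, b] := by
    funext i
    fin_cases i <;> simp [Equiv.swap_apply_def]
  rw [h2] at h
  exact h

private lemma concave_comb (f : (Fin 2 → ℝ) → ℝ)
    (hconc : ConcaveOn ℝ (stdSimplex ℝ (Fin 2)) f)
    (p a b : ℝ) (hp0 : 0 ≤ p) (hp1 : p ≤ 1)
    (ha0 : 0 ≤ a) (ha1 : a ≤ 1) (hb0 : 0 ≤ b) (hb1 : b ≤ 1) :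
    p * f ![1 - a, a] + (1 - p) * f ![1 - b, b] ≤
      f ![1 - (p * a + (1 - p) * b), p * a + (1 - p) * b] := by
  have h := hconc.2 (vec2_mem a ha0 ha1) (vec2_mem b hb0 hb1) hp0
    (by linarith : (0:ℝ) ≤ 1 - p) (by ring)
  have hv : p • ![1 - a, a] + (1 - p) • ![1 - b, b]
      = ![1 - (p * a + (1 - p) * b), p * a + (1 - p) * b] := by
    funext i
    fin_cases i <;> simp [smul_eq_mul] <;> ring
  rw [hv] at h
  simpa [smul_eq_mul] using h

private lemma fmono (f : (Fin 2 → ℝ) → ℝ) (hsym : SymmetricFn f)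
    (hconc : ConcaveOn ℝ (stdSimplex ℝ (Fin 2)) f)
    (a b : ℝ) (h0 : 0 ≤ a) (hab : a ≤ b) (hb : b ≤ 1/2) :
    f ![1 - a, a] ≤ f ![1 - b, b] := by
  rcases eq_or_lt_of_le hab with rfl | hlt
  · exact le_refl _
  · have ha2 : a < 1/2 := lt_of_lt_of_le hlt hb
    have hd : 0 < 1 - 2*a := by linarith
    set p : ℝ := (1 - a - b)/(1 - 2*a) with hp
    have hp0 : 0 ≤ p := div_nonneg (by linarith) hd.le
    have hp1 : p ≤ 1 := by rw [div_le_one hd]; linarith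
    have key := concave_comb f hconc p a (1-a) hp0 hp1 h0 (by linarith)
      (by linarith) (by linarith)
    have hpd : p * (1 - 2*a) = 1 - a - b := by
      rw [hp]; exact div_mul_cancel₀ _ hd.ne'
    have hcomb : p * a + (1 - p) * (1 - a) = b := by nlinarith [hpd]
    rw [hcomb] at key
    have h1a : (1 - (1 - a) : ℝ) = a := by ring
    rw [h1a] at key
    rw [fswap f hsym a (1-a)] at key
    linarith

private lemma fratio (f : (Fin 2 → ℝ) → ℝ)
    (hconc : ConcaveOn ℝ (stdSimplex ℝ (Fin 2)) f)
    (hf10 : f ![1, 0] = 0)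
    (t u : ℝ) (ht0 : 0 ≤ t) (htu : t ≤ u) (hu1 : u ≤ 1) (hu0 : 0 < u) :
    (t/u) * f ![1 - u, u] ≤ f ![1 - t, t] := by
  have key := concave_comb f hconc (t/u) u 0 (div_nonneg ht0 hu0.le)
    ((div_le_one hu0).2 htu) hu0.le hu1 le_rfl zero_le_one
  have h1 : (t/u) * u + (1 - t/u) * 0 = t := by field_simp; ring
  rw [h1] at key
  have h2 : (![1 - 0, 0] : Fin 2 → ℝ) = ![1, 0] := by
    funext i; fin_cases i <;> norm_num
  rw [h2, hf10] at key
  linarith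

set_option maxHeartbeats 1000000 in
/-- Order relation (9): for every symmetric concave `f` on the probability simplex
with `f(1,0) = 0` whose value at the coherence vector of `D^(m₂)`'s coherent
component is positive, the average coherences of the qubit decompositions
`D^(m₂)`, `D^(s)`, `D^(M)` satisfy `C̄(D^(m₂)) < C̄(D^(s)) ≤ C̄(D^(M))`. -/
theorem order_relation_Dm2_Ds_DM (n θ : ℝ)
    (hn0 : 0 ≤ n) (hn1 : n < 1) (hθ0 : 0 ≤ θ) (hθ1 : θ ≤ Real.pi / 2)
    (f : (Fin 2 → ℝ) → ℝ) (hsym : SymmetricFn f)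
    (hconc : ConcaveOn ℝ (stdSimplex ℝ (Fin 2)) f)
    (hf10 : f ![1, 0] = 0) :
    let θo := Real.arccos (n * Real.cos θ)
    let θ₄ := Real.arccos ((1 + 2 * n * Real.cos θ + n ^ 2 * Real.cos (2 * θ)) /
      (1 + n ^ 2 + 2 * n * Real.cos θ))
    let p₂ : ℝ := (1 + n ^ 2 + 2 * n * Real.cos θ) / (2 * (1 + n * Real.cos θ))
    0 < f ![Real.cos (θ₄ / 2) ^ 2, Real.sin (θ₄ / 2) ^ 2] →
    p₂ * f ![Real.cos (θ₄ / 2) ^ 2, Real.sin (θ₄ / 2) ^ 2] <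
        f ![Real.cos (θ / 2) ^ 2, Real.sin (θ / 2) ^ 2] ∧
      f ![Real.cos (θ / 2) ^ 2, Real.sin (θ / 2) ^ 2] ≤
        f ![Real.cos (θo / 2) ^ 2, Real.sin (θo / 2) ^ 2] := by
  intro θo θ₄ p₂ hpos
  have hc0 : 0 ≤ Real.cos θ := Real.cos_nonneg_of_mem_Icc
    ⟨by linarith [Real.pi_pos], hθ1⟩
  have hc1 : Real.cos θ ≤ 1 := Real.cos_le_one θ
  set c : ℝ := Real.cos θ with hc
  have hD : 0 < 1 + n^2 + 2*n*c := by nlinarith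
  have h1nc : 0 < 1 + n*c := by nlinarith
  have hcsq : c^2 ≤ 1 := by nlinarith
  -- half-angle formulas
  have halfc : ∀ x : ℝ, Real.cos (x/2) ^ 2 = 1/2 + Real.cos x / 2 := by
    intro x
    have := Real.cos_sq (x/2)
    rwa [show 2*(x/2) = x by ring] at this
  have half : ∀ x : ℝ, Real.sin (x/2) ^ 2 = (1 - Real.cos x)/2 := by
    intro x
    have h1 := halfc x
    have h2 := Real.sin_sq_add_cos_sq (x/2)
    linarith
  have half1 : ∀ x : ℝ, Real.cos (x/2) ^ 2 = 1 - (1 - Real.cos x)/2 := by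
    intro x
    have h1 := half x
    have h2 := Real.sin_sq_add_cos_sq (x/2)
    linarith
  -- value of cos θ₄
  have hA1 : (1 + 2 * n * c + n ^ 2 * Real.cos (2 * θ)) /
      (1 + n ^ 2 + 2 * n * c) ≤ 1 := by
    rw [div_le_one hD, Real.cos_two_mul, ← hc]
    nlinarith [mul_nonneg (sq_nonneg n) (by nlinarith : (0:ℝ) ≤ 1 - c^2)]
  have hA_1 : (-1 : ℝ) ≤ (1 + 2 * n * c + n ^ 2 * Real.cos (2 * θ)) /
      (1 + n ^ 2 + 2 * n * c) := by
    rw [le_div_iff₀ hD, Real.cos_two_mul, ← hc]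
    nlinarith [sq_nonneg (n*c), mul_nonneg (mul_nonneg hn0 hn0) hc0]
  have hcosθ₄ : Real.cos θ₄ = (1 + 2 * n * c + n ^ 2 * Real.cos (2 * θ)) /
      (1 + n ^ 2 + 2 * n * c) := Real.cos_arccos hA_1 hA1
  -- the key quantities
  set X : ℝ := n^2 * (1 - c^2) / (1 + n^2 + 2*n*c) with hXdef
  set Y : ℝ := (1 - c)/2 with hYdef
  set Yo : ℝ := (1 - n*c)/2 with hYodef
  have hsinθ₄ : Real.sin (θ₄/2)^2 = X := by
    rw [half θ₄, hcosθ₄, Real.cos_two_mul]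
    rw [hXdef]
    field_simp
    ring
  have hcosθ₄2 : Real.cos (θ₄/2)^2 = 1 - X := by
    rw [half1 θ₄, ← hsinθ₄, half θ₄]
  have hsinθ : Real.sin (θ/2)^2 = Y := half θ
  have hcosθ2 : Real.cos (θ/2)^2 = 1 - Y := by
    rw [half1 θ]
  have hcosθo : Real.cos θo = n * c := Real.cos_arccos
    (by nlinarith [mul_nonneg hn0 hc0]) (by nlinarith)
  have hsinθo : Real.sin (θo/2)^2 = Yo := by rw [half θo, hcosθo]
  have hcosθo2 : Real.cos (θo/2)^2 = 1 - Yo := by rw [half1 θo, hcosθo]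
  rw [hsinθ₄, hcosθ₄2] at hpos ⊢
  rw [hsinθ, hcosθ2, hsinθo, hcosθo2]
  have hp₂def : p₂ = (1 + n^2 + 2*n*c) / (2*(1+n*c)) := rfl
  clear_value θo θ₄ p₂ X Y Yo c
  -- basic bounds
  have hX0 : 0 ≤ X := by
    rw [hXdef]
    apply div_nonneg _ hD.le
    nlinarith [mul_nonneg (sq_nonneg n) (show (0:ℝ) ≤ 1 - c^2 by nlinarith)]
  have hX2 : X ≤ 1/2 := by
    rw [hXdef, div_le_iff₀ hD]
    nlinarith [sq_nonneg (n*c), mul_nonneg hn0 hc0, mul_nonneg (mul_nonneg hn0 hn0) hc0]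
  have hY0 : 0 ≤ Y := by rw [hYdef]; linarith
  have hY2 : Y ≤ 1/2 := by
    rw [hYdef]
    nlinarith [mul_nonneg hn0 hc0]
  have hYo2 : Yo ≤ 1/2 := by
    rw [hYodef]
    nlinarith [mul_nonneg hn0 hc0]
  -- X > 0 from hpos
  have hXpos : 0 < X := by
    rcases eq_or_lt_of_le hX0 with h | h
    · exfalso
      rw [← h] at hpos
      have h2 : (![1 - 0, 0] : Fin 2 → ℝ) = ![1, 0] := by
        funext i; fin_cases i <;> norm_num
      rw [h2, hf10] at hpos
      exact lt_irrefl 0 hpos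
    · exact h
  have hnum : 0 < n^2 * (1 - c^2) := by
    by_contra h
    push_neg at h
    have hXle : X ≤ 0 := by
      rw [hXdef]
      exact div_nonpos_of_nonpos_of_nonneg (by linarith) hD.le
    linarith
  have hclt1 : c < 1 := by
    rcases lt_or_ge c 1 with h | h
    · exact h
    · exfalso
      have h2 : 1 - c^2 ≤ 0 := by nlinarith
      nlinarith [mul_nonpos_of_nonneg_of_nonpos (sq_nonneg n) h2]
  -- p₂ facts
  have hp₂0 : 0 < p₂ := by rw [hp₂def]; positivity
  have hp₂1 : p₂ < 1 := by
    rw [hp₂def, div_lt_one (by linarith)]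
    nlinarith
  have hgap : 0 < 1 + n*c - n^2*(1+c) := by
    nlinarith [mul_pos (sub_pos.mpr hn1) (show (0:ℝ) < 1 + n + n*c by nlinarith [mul_nonneg hn0 hc0])]
  have hpXval : p₂ * X = n^2*(1-c^2)/(2*(1+n*c)) := by
    rw [hp₂def, hXdef]
    field_simp
  have hpX : p₂ * X < Y := by
    rw [hpXval, hYdef, div_lt_div_iff₀ (by linarith) two_pos]
    linarith [mul_pos (sub_pos.mpr hclt1) hgap]
  refine ⟨?_, ?_⟩
  · -- strict inequality D^(m₂) < D^(s)
    rcases le_or_gt Y X with h | h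
    · have hr := fratio f hconc hf10 Y X hY0 h (by linarith) hXpos
      have hfrac : p₂ < Y / X := (lt_div_iff₀ hXpos).2 hpX
      calc p₂ * f ![1 - X, X] < (Y/X) * f ![1 - X, X] :=
            mul_lt_mul_of_pos_right hfrac hpos
        _ ≤ f ![1 - Y, Y] := hr
    · have hm := fmono f hsym hconc X Y hX0 h.le hY2
      calc p₂ * f ![1 - X, X] < 1 * f ![1 - X, X] :=
            mul_lt_mul_of_pos_right hp₂1 hpos
        _ = f ![1 - X, X] := one_mul _
        _ ≤ f ![1 - Y, Y] := hm
  · -- D^(s) ≤ D^(M)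
    apply fmono f hsym hconc Y Yo hY0 _ hYo2
    rw [hYdef, hYodef]
    have := mul_nonneg hc0 (sub_nonneg.mpr hn1.le)
    linarith [this]
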